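/- For 0 < q < 1 and a ∈ ℝ, the vector ξ⁺ = Σ_{p=0}^{n} (−i q^{−(a+n)})^p √((q^{2n}; q^{-2})_p / ((−1)^p (q^{-2}; q^{-2})_p)) ξ_p in ℂ^{n+1} (standard orthonormal basis ξ_p) has squared norm ‖ξ⁺‖² = (−q^{−2a}; q^{-2})_n, where (x; q^{-2})_n = ∏_{j=0}^{n-1}(1 − q^{-2j} x). -/

import Mathlib

/-- q-Pochhammer symbol (x; r)_p = ∏_{j=0}^{p-1} (1 - r^j x). -/
def qPoch (x r : ℝ) (p : ℕ) : ℝ := ∏ j ∈ Finset.range p, (1 - r ^ j * x)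

/-- The squared norm of the eigenvector
ξ⁺ = Σ_p (−i q^{−(a+n)})^p √((q^{2n}; q^{-2})_p / ((−1)^p (q^{-2}; q^{-2})_p)) ξ_p
equals (−q^{−2a}; q^{-2})_n. -/
noncomputable def gB (r : ℝ) (n p : ℕ) : ℝ :=
  ∏ j ∈ Finset.range p, ((r ^ n / r ^ j - 1) / (r ^ (j + 1) - 1))

lemma gB_zero (r : ℝ) (n : ℕ) : gB r n 0 = 1 := by simp [gB]

lemma gB_eq_zero (r : ℝ) (hr : r ≠ 0) {n p : ℕ} (h : n < p) : gB r n p = 0 := by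
  apply Finset.prod_eq_zero (Finset.mem_range.2 h)
  rw [div_self (pow_ne_zero _ hr)]
  simp

lemma D_pos (r : ℝ) (hr : 1 < r) (p : ℕ) :
    0 < ∏ j ∈ Finset.range p, (r ^ (j + 1) - 1) := by
  apply Finset.prod_pos
  intro j _
  have : (1:ℝ) < r ^ (j+1) := one_lt_pow₀ hr (by omega)
  linarith

lemma gB_eq (r : ℝ) (hr : 1 < r) (n p : ℕ) :
    gB r n p = (∏ j ∈ Finset.range p, (r ^ n / r ^ j - 1)) /
      (∏ j ∈ Finset.range p, (r ^ (j + 1) - 1)) := by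
  rw [gB, Finset.prod_div_distrib]

lemma gB_pascal (r : ℝ) (hr : 1 < r) (n m : ℕ) (hm : m ≤ n) :
    gB r (n + 1) (m + 1) = gB r n (m + 1) + r ^ (n - m) * gB r n m := by
  have hr0 : r ≠ 0 := by linarith
  have hN1 : (∏ j ∈ Finset.range (m+1), (r ^ (n+1) / r ^ j - 1))
      = (∏ j ∈ Finset.range m, (r ^ n / r ^ j - 1)) * (r ^ (n+1) - 1) := by
    rw [Finset.prod_range_succ']
    simp only [pow_zero, div_one]
    congr 1
    apply Finset.prod_congr rfl
    intro j _
    congr 1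
    rw [pow_succ, pow_succ, mul_div_mul_right _ _ hr0]
  have hN2 : (∏ j ∈ Finset.range (m+1), (r ^ n / r ^ j - 1))
      = (∏ j ∈ Finset.range m, (r ^ n / r ^ j - 1)) * (r ^ n / r ^ m - 1) :=
    Finset.prod_range_succ _ _
  have hD : (∏ j ∈ Finset.range (m+1), (r ^ (j+1) - 1))
      = (∏ j ∈ Finset.range m, (r ^ (j+1) - 1)) * (r ^ (m+1) - 1) :=
    Finset.prod_range_succ _ _
  have hDm := (D_pos r hr m).ne'
  have hDm1 : r ^ (m+1) - 1 ≠ 0 := by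
    have : (1:ℝ) < r ^ (m+1) := one_lt_pow₀ hr (by omega)
    linarith
  have hkey : r ^ (n+1) - 1 = (r ^ n / r ^ m - 1) + r ^ (n - m) * (r ^ (m+1) - 1) := by
    have h1 : r ^ (n - m) * r ^ m = r ^ n := by
      rw [← pow_add, Nat.sub_add_cancel hm]
    have h2 : r ^ n / r ^ m = r ^ (n - m) := by
      field_simp [← h1]
      rw [← h1]; ring
    rw [h2]
    have h3 : r ^ (n - m) * r ^ (m+1) = r ^ (n+1) := by
      rw [← pow_add]
      congr 1
      omega
    ring_nf
    nlinarith [h3]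
  rw [gB_eq r hr, gB_eq r hr, gB_eq r hr, hN1, hN2, hD]
  set A := ∏ j ∈ Finset.range m, (r ^ n / r ^ j - 1) with hA
  set Dm := ∏ j ∈ Finset.range m, (r ^ (j+1) - 1) with hDd
  rw [hkey, mul_add, add_div]
  congr 1
  field_simp

lemma qbinom (r : ℝ) (hr : 1 < r) (s : ℝ) (n : ℕ) :
    ∑ p ∈ Finset.range (n + 1), s ^ p * r ^ (p.choose 2) * gB r n p
      = ∏ j ∈ Finset.range n, (1 + r ^ j * s) := by
  have hr0 : r ≠ 0 := by linarith
  induction n with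
  | zero => simp [gB]
  | succ n ih =>
    rw [Finset.prod_range_succ, ← ih]
    have hstep : ∀ p ∈ Finset.range (n + 2),
        s ^ p * r ^ (p.choose 2) * gB r (n+1) p
          = s ^ p * r ^ (p.choose 2) * gB r n p +
            (if p = 0 then 0 else
              r ^ n * s * (s ^ (p-1) * r ^ ((p-1).choose 2) * gB r n (p-1))) := by
      intro p hp
      match p with
      | 0 => simp [gB_zero]
      | (m+1) =>
        have hm : m ≤ n := by
          have := Finset.mem_range.1 hp; omega
        rw [gB_pascal r hr n m hm]
        simp only [Nat.add_sub_cancel, if_neg (Nat.succ_ne_zero m)]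
        have hc : (m+1).choose 2 = m + m.choose 2 := by
          rw [Nat.choose_succ_succ]; simp
        have he : r ^ ((m+1).choose 2) * r ^ (n - m) = r ^ n * r ^ (m.choose 2) := by
          rw [← pow_add, ← pow_add, hc]
          congr 1
          omega
        rw [mul_add]
        congr 1
        calc s ^ (m+1) * r ^ ((m+1).choose 2) * (r ^ (n-m) * gB r n m)
            = s ^ (m+1) * (r ^ ((m+1).choose 2) * r ^ (n-m)) * gB r n m := by ring
          _ = _ := by rw [he, pow_succ]; ring
    rw [Finset.sum_congr rfl hstep, Finset.sum_add_distrib]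
    rw [Finset.sum_range_succ _ (n+1), gB_eq_zero r hr0 (Nat.lt_succ_self n)]
    rw [Finset.sum_range_succ' _ (n+1)]
    simp only [Nat.add_sub_cancel, if_neg (Nat.succ_ne_zero _), if_pos rfl,
      mul_zero, add_zero]
    rw [← Finset.mul_sum]
    norm_num
    ring

lemma prod_pow_id (r : ℝ) (p : ℕ) :
    ∏ j ∈ Finset.range p, r ^ j = r ^ (p.choose 2) := by
  rw [Finset.prod_pow_eq_pow_sum, Finset.sum_range_id, Nat.choose_two_right]

theorem stmt11 (q a : ℝ) (hq0 : 0 < q) (hq1 : q < 1) (n : ℕ)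
    (ξ : Fin (n + 1) → ℂ)
    (hξ : ∀ p : Fin (n + 1), ξ p =
      (-Complex.I * ((q ^ (-(a + (n : ℝ))) : ℝ) : ℂ)) ^ (p : ℕ) *
        ((Real.sqrt (qPoch (q ^ (2 * n)) ((q ^ 2)⁻¹) (p : ℕ) /
          ((-1 : ℝ) ^ (p : ℕ) * qPoch ((q ^ 2)⁻¹) ((q ^ 2)⁻¹) (p : ℕ))) : ℝ) : ℂ)) :
    ∑ p : Fin (n + 1), Complex.normSq (ξ p) = qPoch (-(q ^ (-2 * a))) ((q ^ 2)⁻¹) n := by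
  set r : ℝ := (q ^ 2)⁻¹ with hrdef
  have hq2 : 0 < q ^ 2 := by positivity
  have hq21 : q ^ 2 < 1 := by nlinarith
  have hr : 1 < r := (one_lt_inv₀ hq2).2 hq21
  have hr0 : r ≠ 0 := by linarith
  set s : ℝ := q ^ (-2 * a) with hsdef
  have hs0 : 0 < s := Real.rpow_pos_of_pos hq0 _
  -- q ^ (2*n) (npow) = r⁻¹ ^ n
  have hq2n : q ^ (2 * n) = (r⁻¹) ^ n := by
    rw [hrdef, inv_inv, pow_mul]
  -- squared scalar
  have hc2 : (q ^ (-(a + (n:ℝ)))) * (q ^ (-(a + (n:ℝ)))) = s * r ^ n := by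
    rw [← Real.rpow_add hq0, hsdef]
    have h1 : -(a + (n:ℝ)) + -(a + (n:ℝ)) = (-2*a) + (-2 * (n:ℝ)) := by ring
    rw [h1, Real.rpow_add hq0]
    congr 1
    rw [show ((-2:ℝ) * (n:ℝ)) = -(((2*n : ℕ)) : ℝ) by push_cast; ring,
      Real.rpow_neg hq0.le, Real.rpow_natCast, hrdef, pow_mul, ← inv_pow]
  have hD : ∀ p : ℕ, (-1:ℝ) ^ p * qPoch r r p = ∏ j ∈ Finset.range p, (r ^ (j+1) - 1) := by
    intro p
    rw [qPoch]
    have : ∀ j ∈ Finset.range p, (1 - r ^ j * r) = (-1) * (r ^ (j+1) - 1) := by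
      intro j _
      rw [← pow_succ]
      ring
    rw [Finset.prod_congr rfl this, Finset.prod_mul_distrib, Finset.prod_const,
      Finset.card_range, ← mul_assoc, ← mul_pow]
    norm_num
  have hterm : ∀ p : Fin (n+1), Complex.normSq (ξ p)
      = s ^ (p:ℕ) * r ^ ((p:ℕ).choose 2) * gB r n (p:ℕ) := by
    intro p
    set pp := (p : ℕ) with hpp
    have hpn : pp ≤ n := Nat.lt_succ_iff.mp p.isLt
    have hDpos := D_pos r hr pp
    -- numerator product rewrite
    have hnum : qPoch (q ^ (2*n)) r pp
        = (∏ j ∈ Finset.range pp, (r ^ n / r ^ j - 1)) * (r ^ pp.choose 2 / (r ^ n) ^ pp) := by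
      rw [qPoch]
      have hfac : ∀ j ∈ Finset.range pp, (1 - r ^ j * q ^ (2*n))
          = (r ^ n / r ^ j - 1) * (r ^ j / r ^ n) := by
        intro j _
        rw [hq2n]
        have h1 : r ^ j ≠ 0 := pow_ne_zero _ hr0
        have h2 : r ^ n ≠ 0 := pow_ne_zero _ hr0
        field_simp
        rw [sub_mul, one_mul, mul_assoc, ← mul_pow, one_div, inv_mul_cancel₀ hr0, one_pow, mul_one]
      rw [Finset.prod_congr rfl hfac, Finset.prod_mul_distrib, Finset.prod_div_distrib,
        Finset.prod_const, prod_pow_id, Finset.card_range]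
    have hnumpos : 0 < qPoch (q ^ (2*n)) r pp := by
      rw [qPoch]
      apply Finset.prod_pos
      intro j hj
      have hj' : j < n := lt_of_lt_of_le (Finset.mem_range.1 hj) hpn
      have : r ^ j * q ^ (2*n) < 1 := by
        rw [hq2n]
        rw [inv_pow r n, ← div_eq_mul_inv, div_lt_one (by positivity)]
        exact pow_lt_pow_right₀ hr hj'
      linarith
    have hcf : 0 ≤ qPoch (q ^ (2*n)) r pp / ((-1:ℝ) ^ pp * qPoch r r pp) := by
      rw [hD pp]
      positivity
    rw [hξ p, map_mul, map_pow, Complex.normSq_mul, Complex.normSq_neg, Complex.normSq_I,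
      one_mul, Complex.normSq_ofReal, Complex.normSq_ofReal, hc2,
      Real.mul_self_sqrt hcf, hD pp, hnum, gB_eq r hr]
    have h2 : (r ^ n) ^ pp ≠ 0 := pow_ne_zero _ (pow_ne_zero _ hr0)
    field_simp
    ring
  have hsum : ∑ p : Fin (n + 1), Complex.normSq (ξ p)
      = ∑ p ∈ Finset.range (n+1), s ^ p * r ^ (p.choose 2) * gB r n p := by
    rw [Finset.sum_congr rfl (fun p _ => hterm p) ]
    exact Fin.sum_univ_eq_sum_range (fun p => s ^ p * r ^ p.choose 2 * gB r n p) (n+1)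
  rw [hsum, qbinom r hr s n, qPoch]
  apply Finset.prod_congr rfl
  intro j _
  rw [mul_neg, sub_neg_eq_add]
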